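/- Let X be a topological space, G a group acting on X, and F : X → ℝ an upper semicontinuous function that is G-invariant, i.e. F(g • x) = F(x) for all g ∈ G and x ∈ X. Assume F(x) ≥ 0 for all x and that F(y₀) = 0 for some y₀ ∈ X. Then F(x₀) = 0 for every point x₀ ∈ X whose orbit {g • x₀ : g ∈ G} is dense in X. (This is the abstract form of the paper's Theorem 2.1: if the Kobayashi pseudometric of a compact complex manifold vanishes for one complex structure, then it vanishes for every ergodic complex structure in the same deformation class.) -/
import Mathlib

/-- Abstract form of Theorem 2.1: if a nonnegative, upper semicontinuous,
`G`-invariant function vanishes somewhere, it vanishes at every point with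
dense orbit. -/
theorem usc_invariant_vanishes_at_ergodic
    {X : Type*} [TopologicalSpace X] {G : Type*} [Group G] [MulAction G X]
    (F : X → ℝ)
    (husc : ∀ α : ℝ, IsOpen {x : X | F x < α})
    (hinv : ∀ (g : G) (x : X), F (g • x) = F x)
    (hnonneg : ∀ x : X, 0 ≤ F x)
    (y₀ : X) (hzero : F y₀ = 0)
    (x₀ : X) (hdense : Dense {x : X | ∃ g : G, g • x₀ = x}) :
    F x₀ = 0 := by
  have key : ∀ ε : ℝ, 0 < ε → F x₀ < ε := by
    intro ε hε
    have hU : IsOpen {x : X | F x < ε} := husc ε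
    have hne : ({x : X | F x < ε}).Nonempty := ⟨y₀, by simp [hzero, hε]⟩
    obtain ⟨x, hg, hx1⟩ := hdense.exists_mem_open hU hne
    obtain ⟨g, rfl⟩ := hg
    simpa [hinv] using hx1
  have h0 : F x₀ ≤ 0 := le_of_forall_pos_lt_add fun ε hε => by simpa using key ε hε
  exact le_antisymm h0 (hnonneg x₀)
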